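/- Let (τₜ) be a semigroup of unital positive maps on a von Neumann algebra A₀ with normal invariant state φ₀, and let p be a sub-harmonic projection with s-limₜ τₜ(p) = 1. If ‖φᵖ∘τᵖₜ − φ₀ᵖ‖ → 0 as t → ∞ for every normal state φᵖ on the corner pA₀p (reduced dynamics), then ‖φ∘τₜ − φ₀‖ → 0 for every normal state φ on A₀. -/

import Mathlib

open ComplexOrder Filter

variable {A : Type*} [NormedRing A] [StarRing A] [CStarRing A]
  [NormedAlgebra ℂ A] [StarModule ℂ A] [CompleteSpace A]
  [PartialOrder A] [StarOrderedRing A]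

/-- Compression to the corner: `x ↦ p * x * p`, as a continuous linear map. -/
noncomputable def cornerCompression (p : A) : A →L[ℂ] A :=
  (ContinuousLinearMap.mul ℂ A p).comp ((ContinuousLinearMap.mul ℂ A).flip p)

namespace StrongErgAux

local instance : CStarAlgebra A := { }

lemma cnorm_eq_re {z : ℂ} (hz : 0 ≤ z) : ‖z‖ = z.re := by
  obtain ⟨h1, h2⟩ := Complex.nonneg_iff.mp hz
  rw [Complex.norm_def, Complex.normSq_apply, ← h2]
  simpa using Real.sqrt_mul_self h1

lemma cle_norm {z w : ℂ} (hz : 0 ≤ z) (hw : z ≤ w) : ‖z‖ ≤ ‖w‖ := by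
  rw [cnorm_eq_re hz, cnorm_eq_re (hz.trans hw)]
  exact (Complex.le_def.mp hw).1

variable (f : A →L[ℂ] ℂ)

lemma pos_mono (hf : ∀ x : A, 0 ≤ x → 0 ≤ f x) {u v : A} (h : u ≤ v) : f u ≤ f v :=
  sub_nonneg.mp (by rw [← map_sub]; exact hf _ (sub_nonneg.mpr h))

lemma im_eq_zero (hf : ∀ x : A, 0 ≤ x → 0 ≤ f x) {a : A} (ha : IsSelfAdjoint a) : (f a).im = 0 := by
  have h1 : 0 ≤ f (algebraMap ℝ A ‖a‖ - a) :=
    hf _ (sub_nonneg.mpr ha.le_algebraMap_norm_self)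
  have h2 : 0 ≤ f (a - -algebraMap ℝ A ‖a‖) :=
    hf _ (sub_nonneg.mpr ha.neg_algebraMap_norm_le_self)
  rw [map_sub] at h1 h2
  have i1 := (Complex.nonneg_iff.mp h1).2
  have i2 := (Complex.nonneg_iff.mp h2).2
  simp only [Complex.sub_im, map_neg, Complex.neg_im] at i1 i2
  linarith

lemma map_star' (hf : ∀ x : A, 0 ≤ x → 0 ≤ f x) (x : A) : f (star x) = (starRingEnd ℂ) (f x) := by
  have hx := realPart_add_I_smul_imaginaryPart x
  have ha : IsSelfAdjoint ((realPart x : A)) := (realPart x).2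
  have hb : IsSelfAdjoint ((imaginaryPart x : A)) := (imaginaryPart x).2
  have hstar : star x = (realPart x : A) - Complex.I • (imaginaryPart x : A) := by
    conv_lhs => rw [← hx]
    rw [star_add, star_smul, ha.star_eq, hb.star_eq]
    simp [sub_eq_add_neg]
  have hfx : f x = f (realPart x : A) + Complex.I * f (imaginaryPart x : A) := by
    conv_lhs => rw [← hx]
    rw [map_add, map_smul, smul_eq_mul]
  have ia := im_eq_zero f hf ha
  have ib := im_eq_zero f hf hb
  rw [hstar, map_sub, map_smul, smul_eq_mul]
  apply Complex.ext <;>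
    simp [hfx, Complex.add_re, Complex.add_im, Complex.mul_re, Complex.mul_im, ia, ib]

lemma cs (hf : ∀ x : A, 0 ≤ x → 0 ≤ f x) (a b : A) :
    ‖f (star b * a)‖ ^ 2 ≤ ‖f (star a * a)‖ * ‖f (star b * b)‖ := by
  set α := f (star b * a) with hα
  have hfa : 0 ≤ f (star a * a) := hf _ (star_mul_self_nonneg a)
  have hfb : 0 ≤ f (star b * b) := hf _ (star_mul_self_nonneg b)
  have hA0 : (f (star a * a)).re = ‖f (star a * a)‖ := (cnorm_eq_re hfa).symm
  have hB0 : (f (star b * b)).re = ‖f (star b * b)‖ := (cnorm_eq_re hfb).symm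
  have hAim : (f (star a * a)).im = 0 := (Complex.nonneg_iff.mp hfa).2.symm
  have hBim : (f (star b * b)).im = 0 := (Complex.nonneg_iff.mp hfb).2.symm
  set A0 := ‖f (star a * a)‖
  set B0 := ‖f (star b * b)‖
  set K := ‖α‖ ^ 2 with hK
  have hKuv : K = α.re ^ 2 + α.im ^ 2 := by
    rw [hK, Complex.sq_norm, Complex.normSq_apply]; ring
  have hab : f (star a * b) = (starRingEnd ℂ) α := by
    rw [hα, ← map_star' f hf, star_mul, star_star]
  have key : ∀ t : ℝ, 0 ≤ A0 - 2 * t * K + t ^ 2 * K * B0 := by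
    intro t
    set c : ℂ := -(t : ℂ) * α with hc
    have hv : (0:ℂ) ≤ f (star (a + c • b) * (a + c • b)) := hf _ (star_mul_self_nonneg _)
    have hexp : star (a + c • b) * (a + c • b)
        = star a * a + c • (star a * b) + (star c) • (star b * a)
          + (c * (star c)) • (star b * b) := by
      rw [star_add, star_smul]
      simp only [add_mul, mul_add, smul_add, smul_mul_assoc, mul_smul_comm, smul_smul]
      abel
    rw [hexp] at hv
    simp only [map_add, map_smul, smul_eq_mul, hab, Complex.star_def] at hv
    have hre := (Complex.nonneg_iff.mp hv).1
    simp only [hc, Complex.add_re, Complex.mul_re, Complex.mul_im, Complex.neg_re,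
      Complex.neg_im, Complex.ofReal_re, Complex.ofReal_im, Complex.conj_re, Complex.conj_im,
      hAim, hBim, hA0, hB0] at hre
    rw [hKuv]
    nlinarith [hre]
  have hA0n : (0:ℝ) ≤ A0 := norm_nonneg _
  have hB0n : (0:ℝ) ≤ B0 := norm_nonneg _
  have hKn : (0:ℝ) ≤ K := by positivity
  show K ≤ A0 * B0
  by_cases hB : B0 = 0
  · rcases eq_or_lt_of_le hKn with h0 | h0
    · rw [← h0]; positivity
    · exfalso
      have h := key ((A0 + 1) / K)
      rw [hB] at h
      have e : (A0 + 1) / K * K = A0 + 1 := div_mul_cancel₀ _ h0.ne'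
      nlinarith [h, e]
  · have hB' : 0 < B0 := lt_of_le_of_ne hB0n (Ne.symm hB)
    have h := key (1 / B0)
    have e1 : 2 * (1 / B0) * K * B0 = 2 * K := by field_simp
    have e2 : (1 / B0) ^ 2 * K * B0 * B0 = K := by field_simp
    nlinarith [h, hB', mul_le_mul_of_nonneg_right h hB'.le]

lemma norm_apply_le (hf : ∀ x : A, 0 ≤ x → 0 ≤ f x) (x : A) : ‖f x‖ ≤ ‖f 1‖ * ‖x‖ := by
  have h1 : f (star x * x) ≤ f (algebraMap ℝ A (‖x‖ ^ 2)) :=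
    pos_mono f hf CStarAlgebra.star_mul_le_algebraMap_norm_sq
  have halg : f (algebraMap ℝ A (‖x‖ ^ 2)) = ((‖x‖ ^ 2 : ℝ) : ℂ) * f 1 := by
    rw [Algebra.algebraMap_eq_smul_one, ← Complex.coe_smul, map_smul, smul_eq_mul]
  have h2 : ‖f (star x * x)‖ ≤ ‖x‖ ^ 2 * ‖f 1‖ := by
    calc ‖f (star x * x)‖ ≤ ‖f (algebraMap ℝ A (‖x‖ ^ 2))‖ :=
          cle_norm (hf _ (star_mul_self_nonneg x)) h1
      _ = ‖x‖ ^ 2 * ‖f 1‖ := by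
          rw [halg, norm_mul, Complex.norm_real, Real.norm_eq_abs, abs_of_nonneg (by positivity)]
  have h3 := cs f hf x 1
  rw [star_one, one_mul, mul_one] at h3
  have h4 : ‖f x‖ ^ 2 ≤ (‖f 1‖ * ‖x‖) ^ 2 := by nlinarith [norm_nonneg (f 1), norm_nonneg (f x)]
  exact (pow_le_pow_iff_left₀ (norm_nonneg _) (by positivity) (by norm_num)).mp h4


lemma posmap_map_algebraMap (g : A →L[ℂ] A) (hg1 : g 1 = 1) (r : ℝ) :
    g (algebraMap ℝ A r) = algebraMap ℝ A r := by
  rw [Algebra.algebraMap_eq_smul_one, ← Complex.coe_smul, map_smul, hg1]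

lemma posmap_mono (g : A →L[ℂ] A) (hg : ∀ x : A, 0 ≤ x → 0 ≤ g x) {u v : A} (h : u ≤ v) :
    g u ≤ g v := sub_nonneg.mp (by rw [← map_sub]; exact hg _ (sub_nonneg.mpr h))

lemma posmap_sa_norm [Nontrivial A] (g : A →L[ℂ] A) (hg1 : g 1 = 1)
    (hg : ∀ x : A, 0 ≤ x → 0 ≤ g x) {h : A} (hh : IsSelfAdjoint h) :
    ‖g h‖ ≤ 3 * ‖h‖ := by
  have e := posmap_map_algebraMap g hg1
  have h1 : (0:A) ≤ g h + algebraMap ℝ A ‖h‖ := by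
    have h0 := hg _ (sub_nonneg.mpr hh.neg_algebraMap_norm_le_self)
    rwa [map_sub, map_neg, e, sub_neg_eq_add] at h0
  have h3 : g h ≤ algebraMap ℝ A ‖h‖ := by
    have := posmap_mono g hg hh.le_algebraMap_norm_self
    rwa [e] at this
  have h2 : g h + algebraMap ℝ A ‖h‖ ≤ algebraMap ℝ A (2 * ‖h‖) := by
    calc g h + algebraMap ℝ A ‖h‖ ≤ algebraMap ℝ A ‖h‖ + algebraMap ℝ A ‖h‖ :=
        add_le_add_left h3 _
      _ = algebraMap ℝ A (2 * ‖h‖) := by rw [← map_add]; norm_num [two_mul]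
  have h4 : ‖g h + algebraMap ℝ A ‖h‖‖ ≤ 2 * ‖h‖ := by
    have := CStarAlgebra.norm_le_norm_of_nonneg_of_le h1 h2
    rwa [norm_algebraMap', Real.norm_eq_abs, abs_of_nonneg (by positivity)] at this
  calc ‖g h‖ = ‖g h + algebraMap ℝ A ‖h‖ - algebraMap ℝ A ‖h‖‖ := by
        rw [add_sub_cancel_right]
    _ ≤ ‖g h + algebraMap ℝ A ‖h‖‖ + ‖algebraMap ℝ A ‖h‖‖ := norm_sub_le _ _
    _ ≤ 2 * ‖h‖ + ‖h‖ := by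
        rw [norm_algebraMap', Real.norm_eq_abs, abs_of_nonneg (norm_nonneg h)]
        exact add_le_add_left h4 _
    _ = 3 * ‖h‖ := by ring

lemma posmap_norm [Nontrivial A] (g : A →L[ℂ] A) (hg1 : g 1 = 1)
    (hg : ∀ x : A, 0 ≤ x → 0 ≤ g x) (z : A) : ‖g z‖ ≤ 6 * ‖z‖ := by
  have hz := realPart_add_I_smul_imaginaryPart z
  have hra : ‖(realPart z : A)‖ ≤ ‖z‖ := by
    rw [realPart_apply_coe]
    calc ‖(2:ℝ)⁻¹ • (z + star z)‖ = 2⁻¹ * ‖z + star z‖ := by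
          rw [norm_smul, Real.norm_eq_abs]; norm_num
      _ ≤ 2⁻¹ * (‖z‖ + ‖star z‖) := mul_le_mul_of_nonneg_left (norm_add_le _ _) (by norm_num)
      _ = ‖z‖ := by rw [norm_star]; ring
  have hia : ‖(imaginaryPart z : A)‖ ≤ ‖z‖ := by
    rw [imaginaryPart_apply_coe]
    calc ‖-Complex.I • (2:ℝ)⁻¹ • (z - star z)‖ = ‖(2:ℝ)⁻¹ • (z - star z)‖ := by
          rw [norm_smul]; simp
      _ = 2⁻¹ * ‖z - star z‖ := by rw [norm_smul, Real.norm_eq_abs]; norm_num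
      _ ≤ 2⁻¹ * (‖z‖ + ‖star z‖) := mul_le_mul_of_nonneg_left (norm_sub_le _ _) (by norm_num)
      _ = ‖z‖ := by rw [norm_star]; ring
  have h1 := posmap_sa_norm g hg1 hg (realPart z).2
  have h2 := posmap_sa_norm g hg1 hg (imaginaryPart z).2
  calc ‖g z‖ = ‖g (realPart z : A) + Complex.I • g (imaginaryPart z : A)‖ := by
        conv_lhs => rw [← hz]
        rw [map_add, map_smul]
    _ ≤ ‖g (realPart z : A)‖ + ‖Complex.I • g (imaginaryPart z : A)‖ := norm_add_le _ _
    _ ≤ 3 * ‖z‖ + 3 * ‖z‖ := by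
        refine add_le_add (h1.trans (by linarith)) ?_
        rw [norm_smul]
        simp only [Complex.norm_I, one_mul]
        exact h2.trans (by linarith)
    _ = 6 * ‖z‖ := by ring

lemma corner_tail (f : A →L[ℂ] ℂ) (hf : ∀ x : A, 0 ≤ x → 0 ≤ f x) (hf1 : f 1 = 1)
    {p : A} (hp : IsIdempotentElem p) (hpsa : IsSelfAdjoint p) (hpn : ‖p‖ ≤ 1)
    {δ : ℝ} (hδ : 0 ≤ δ) (hfq : ‖f (1 - p)‖ ≤ δ ^ 2) (x : A) :
    ‖f x - f (p * x * p)‖ ≤ 2 * δ * ‖x‖ := by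
  have hqsa : IsSelfAdjoint (1 - p : A) := (IsSelfAdjoint.one A).sub hpsa
  have hqidem : (1 - p : A) * (1 - p) = 1 - p := by
    simp only [sub_mul, mul_sub, mul_one, one_mul, hp.eq]; abel
  have hq1 : ‖f 1‖ = 1 := by rw [hf1]; simp
  have norm_f_le : ∀ z : A, ‖f z‖ ≤ ‖z‖ := fun z => by
    simpa [hq1] using norm_apply_le f hf z
  have t2 : ‖f ((1 - p) * x)‖ ≤ δ * ‖x‖ := by
    have h := cs f hf x (1 - p)
    rw [hqsa.star_eq, hqidem] at h
    have hx2 : ‖f (star x * x)‖ ≤ ‖x‖ ^ 2 := by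
      have := norm_f_le (star x * x)
      rw [CStarRing.norm_star_mul_self] at this
      nlinarith [this]
    have hsq : ‖f ((1 - p) * x)‖ ^ 2 ≤ (δ * ‖x‖) ^ 2 := by
      nlinarith [h, hx2, hfq, norm_nonneg (f (1 - p)), norm_nonneg (f (star x * x)),
        norm_nonneg x, hδ,
        mul_le_mul hx2 hfq (norm_nonneg _) (by positivity)]
    exact (pow_le_pow_iff_left₀ (norm_nonneg _) (by positivity) two_ne_zero).mp hsq
  have t3 : ‖f (p * x * (1 - p))‖ ≤ δ * ‖x‖ := by
    have hw : star (p * x) = star x * p := by rw [star_mul, hpsa.star_eq]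
    have h := cs f hf (1 - p) (star (p * x))
    rw [star_star, hqsa.star_eq, hqidem, hw] at h
    have hwn : ‖p * x‖ ≤ ‖x‖ := by
      calc ‖p * x‖ ≤ ‖p‖ * ‖x‖ := norm_mul_le _ _
        _ ≤ 1 * ‖x‖ := mul_le_mul_of_nonneg_right hpn (norm_nonneg _)
        _ = ‖x‖ := one_mul _
    have hx2 : ‖f (p * x * (star x * p))‖ ≤ ‖x‖ ^ 2 := by
      have hb := norm_f_le (p * x * (star x * p))
      have heq : p * x * (star x * p) = (p * x) * star (p * x) := by rw [hw]
      rw [heq]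
      rw [heq, CStarRing.norm_self_mul_star] at hb
      nlinarith [hb, hwn, norm_nonneg (p * x), norm_nonneg x]
    have hsq : ‖f (p * x * (1 - p))‖ ^ 2 ≤ (δ * ‖x‖) ^ 2 := by
      nlinarith [h, hx2, hfq, norm_nonneg (f (1 - p)),
        norm_nonneg (f ((p * x) * star (p * x))), norm_nonneg x, hδ,
        mul_le_mul hfq hx2 (norm_nonneg _) (by positivity)]
    exact (pow_le_pow_iff_left₀ (norm_nonneg _) (by positivity) two_ne_zero).mp hsq
  have hd : x - p * x * p = (1 - p) * x + p * x * (1 - p) := by noncomm_ring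
  have hfd : f x - f (p * x * p) = f ((1 - p) * x) + f (p * x * (1 - p)) := by
    rw [← map_sub, hd, map_add]
  rw [hfd]
  calc ‖f ((1 - p) * x) + f (p * x * (1 - p))‖
      ≤ ‖f ((1 - p) * x)‖ + ‖f (p * x * (1 - p))‖ := norm_add_le _ _
    _ ≤ δ * ‖x‖ + δ * ‖x‖ := add_le_add t2 t3
    _ = 2 * δ * ‖x‖ := by ring

lemma sandwich {p : A} (hp : IsIdempotentElem p) (z : A) :
    p * (p * z * p) * p = p * z * p := by
  have A1 : p * (p * z * p) = p * z * p := by rw [← mul_assoc, ← mul_assoc, hp.eq]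
  have A2 : p * z * p * p = p * z * p := by rw [mul_assoc (p * z) p p, hp.eq]
  rw [A1, A2]

end StrongErgAux

open StrongErgAux in
/-- if `τₜ(p) → 1` strongly (equivalently `φ(τₜ p) → 1` for every
state) and the reduced dynamics on the corner `pA₀p` is strongly ergodic in the
predual-norm sense, then so is the full dynamics. -/
theorem strong_ergodicity_lifts_from_corner
    (τ : ℕ → A →L[ℂ] A)
    (hsemi : ∀ s t : ℕ, ∀ x : A, τ (s + t) x = τ s (τ t x))
    (hτ0 : ∀ x : A, τ 0 x = x)
    (hτ1 : ∀ t, τ t 1 = 1) (hτpos : ∀ t, ∀ x : A, 0 ≤ x → 0 ≤ τ t x)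
    (φ₀ : A →L[ℂ] ℂ) (hφ₀pos : ∀ x : A, 0 ≤ x → 0 ≤ φ₀ x) (hφ₀1 : φ₀ 1 = 1)
    (hφ₀inv : ∀ t, ∀ x : A, φ₀ (τ t x) = φ₀ x)
    (p : A) (hp : IsIdempotentElem p) (hpsa : IsSelfAdjoint p)
    (hsub : ∀ t, p ≤ τ t p)
    -- `s-limₜ τₜ(p) = 1` :
    (hslim : ∀ φ : A →L[ℂ] ℂ, (∀ x : A, 0 ≤ x → 0 ≤ φ x) → φ 1 = 1 →
      Tendsto (fun t : ℕ => φ (τ t p)) atTop (nhds 1))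
    -- strong ergodicity of the reduced dynamics on the corner `pA₀p` :
    (hcorner : ∀ φ : A →L[ℂ] ℂ, (∀ x : A, 0 ≤ x → 0 ≤ φ x) → φ p = 1 →
      (∀ x : A, φ x = φ (p * x * p)) →
      Tendsto
        (fun t : ℕ =>
          ‖(φ.comp ((cornerCompression p).comp
              ((τ t).comp (cornerCompression p)))) -
            φ₀.comp (cornerCompression p)‖)
        atTop (nhds 0)) :
    -- strong ergodicity of the full dynamics:
    ∀ φ : A →L[ℂ] ℂ, (∀ x : A, 0 ≤ x → 0 ≤ φ x) → φ 1 = 1 →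
      Tendsto (fun t : ℕ => ‖φ.comp (τ t) - φ₀‖) atTop (nhds 0) := by
  intro φ hφpos hφ1
  haveI : Nontrivial A := ⟨1, 0, fun h => by
    rw [h, map_zero] at hφ₀1; exact one_ne_zero hφ₀1.symm⟩
  have hC : ∀ x : A, cornerCompression p x = p * x * p := by
    intro x
    simp only [cornerCompression, ContinuousLinearMap.comp_apply,
      ContinuousLinearMap.flip_apply, ContinuousLinearMap.mul_apply', mul_assoc]
  have hq0 : (0:A) ≤ 1 - p := by
    have hqidem : (1 - p : A) * (1 - p) = 1 - p := by
      simp only [sub_mul, mul_sub, mul_one, one_mul, hp.eq]; abel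
    have : (1 - p : A) = star (1 - p) * (1 - p) := by
      rw [((IsSelfAdjoint.one A).sub hpsa).star_eq, hqidem]
    rw [this]; exact star_mul_self_nonneg _
  have hp0 : (0:A) ≤ p := by
    have : p = star p * p := by rw [hpsa.star_eq, hp.eq]
    rw [this]; exact star_mul_self_nonneg _
  have hpn : ‖p‖ ≤ 1 := by
    rcases eq_or_ne p 0 with h | h
    · simp [h]
    · have h2 : ‖p‖ * ‖p‖ = ‖p‖ := by
        rw [← CStarRing.norm_star_mul_self, hpsa.star_eq, hp.eq]
      have h3 : ‖p‖ ≠ 0 := norm_ne_zero_iff.mpr h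
      nlinarith [norm_nonneg p]
  have hpxp : ∀ x : A, ‖p * x * p‖ ≤ ‖x‖ := by
    intro x
    nlinarith [norm_mul_le p x, norm_mul_le (p * x) p, norm_nonneg p, norm_nonneg x,
      norm_nonneg (p * x), hpn]
  have hφ₀p : φ₀ p = 1 :=
    tendsto_nhds_unique tendsto_const_nhds
      (by simpa only [hφ₀inv] using hslim φ₀ hφ₀pos hφ₀1)
  have hφ₀q : φ₀ (1 - p) = 0 := by rw [map_sub, hφ₀1, hφ₀p, sub_self]
  have hφ₀corner : ∀ x : A, φ₀ x = φ₀ (p * x * p) := by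
    intro x
    have hqn : ‖φ₀ (1 - p)‖ ≤ (0:ℝ) ^ 2 := by rw [hφ₀q]; simp
    have h0 := corner_tail φ₀ hφ₀pos hφ₀1 hp hpsa hpn le_rfl hqn x
    have h1 : ‖φ₀ x - φ₀ (p * x * p)‖ ≤ 0 := by simpa using h0
    have h2 : φ₀ x - φ₀ (p * x * p) = 0 := norm_le_zero_iff.mp h1
    linear_combination h2
  have hτq : ∀ t, τ t (1 - p) ≤ 1 - p := by
    intro t; rw [map_sub, hτ1]; exact sub_le_sub_left (hsub t) 1
  rw [Metric.tendsto_atTop]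
  intro ε hε
  set δ : ℝ := min (ε / 20) (1 / 2) with hδdef
  have hδpos : 0 < δ := lt_min (by linarith) (by norm_num)
  have hδhalf : δ ≤ 1 / 2 := min_le_right _ _
  have hδε : δ ≤ ε / 20 := min_le_left _ _
  have hδsq : δ ^ 2 ≤ δ := by nlinarith
  have hφs := hslim φ hφpos hφ1
  rw [Metric.tendsto_atTop] at hφs
  obtain ⟨s, hs⟩ := hφs (δ ^ 2) (by positivity)
  have hs' : dist (φ (τ s p)) 1 < δ ^ 2 := hs s le_rfl
  set ψ : A →L[ℂ] ℂ := φ.comp (τ s) with hψdef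
  have hψpos : ∀ x : A, 0 ≤ x → 0 ≤ ψ x := fun x hx => hφpos _ (hτpos s x hx)
  have hψ1 : ψ 1 = 1 := by
    show φ (τ s 1) = 1
    rw [hτ1 s, hφ1]
  have hψτq : ∀ t, ‖ψ (τ t (1 - p))‖ ≤ δ ^ 2 := by
    intro t
    have h1 : (0:ℂ) ≤ ψ (τ t (1 - p)) := hψpos _ (hτpos t _ hq0)
    have h2 : ψ (τ t (1 - p)) ≤ φ (τ s (1 - p)) := by
      show φ (τ s (τ t (1 - p))) ≤ φ (τ s (1 - p))
      exact pos_mono φ hφpos (posmap_mono _ (hτpos s) (hτq t))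
    have h3 : ‖φ (τ s (1 - p))‖ ≤ δ ^ 2 := by
      rw [map_sub, hτ1, map_sub, hφ1]
      calc ‖(1:ℂ) - φ (τ s p)‖ = dist (φ (τ s p)) 1 := by
            rw [dist_eq_norm, norm_sub_rev]
        _ ≤ δ ^ 2 := hs'.le
    calc ‖ψ (τ t (1 - p))‖ ≤ ‖φ (τ s (1 - p))‖ := cle_norm h1 h2
      _ ≤ δ ^ 2 := h3
  have hψq : ‖ψ (1 - p)‖ ≤ δ ^ 2 := by
    have h := hψτq 0
    rwa [hτ0] at h
  set c₀ : ℂ := ψ p with hc₀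
  have hc₀pos : 0 ≤ c₀ := hψpos p hp0
  have hc₀eq : c₀ = 1 - ψ (1 - p) := by
    have hsub1 : ψ (1 - p) = 1 - ψ p := by rw [map_sub, hψ1]
    rw [hc₀, hsub1]; ring
  have hc₀re : (3:ℝ) / 4 ≤ c₀.re := by
    have h1 : ‖ψ (1 - p)‖ ≤ 1 / 4 := hψq.trans (by nlinarith)
    have h2 : |(ψ (1 - p)).re| ≤ 1 / 4 := by
      refine le_trans ?_ h1
      exact Complex.abs_re_le_norm _
    have h3 : c₀.re = 1 - (ψ (1 - p)).re := by rw [hc₀eq]; simp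
    rw [h3]
    cases' abs_le.mp h2 with hl hr
    linarith
  have hc₀ne : c₀ ≠ 0 := by
    intro h
    rw [h] at hc₀re
    norm_num at hc₀re
  have hc₀norm : ‖c₀‖ ≤ 1 := by
    have hle : c₀ ≤ ψ 1 := pos_mono ψ hψpos (sub_nonneg.mp hq0)
    rw [hψ1] at hle
    calc ‖c₀‖ = c₀.re := cnorm_eq_re hc₀pos
      _ ≤ (1:ℂ).re := (Complex.le_def.mp hle).1
      _ = 1 := Complex.one_re
  have hreal : c₀ = ((c₀.re : ℝ) : ℂ) := by
    refine Complex.ext (by simp) ?_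
    rw [(Complex.nonneg_iff.mp hc₀pos).2.symm]
    simp
  set φ' : A →L[ℂ] ℂ := c₀⁻¹ • (ψ.comp (cornerCompression p)) with hφ'
  have hφ'apply : ∀ w : A, φ' w = c₀⁻¹ * ψ (p * w * p) := by
    intro w
    rw [hφ']
    simp only [ContinuousLinearMap.smul_apply, ContinuousLinearMap.comp_apply, smul_eq_mul, hC]
  have hφ'pos : ∀ x : A, 0 ≤ x → 0 ≤ φ' x := by
    intro x hx
    rw [hφ'apply]
    have h1 : (0:ℂ) ≤ ψ (p * x * p) := by
      refine hψpos _ ?_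
      have := star_left_conjugate_nonneg hx p
      rwa [hpsa.star_eq] at this
    have h2 : (0:ℂ) ≤ c₀⁻¹ := by
      rw [hreal, ← Complex.ofReal_inv]
      exact Complex.zero_le_real.mpr (inv_nonneg.mpr (by linarith))
    exact mul_nonneg h2 h1
  have hφ'p : φ' p = 1 := by
    rw [hφ'apply, hp.eq, hp.eq, ← hc₀]
    exact inv_mul_cancel₀ hc₀ne
  have hφ'corner : ∀ x : A, φ' x = φ' (p * x * p) := by
    intro x
    rw [hφ'apply, hφ'apply, sandwich hp]
  have hD := hcorner φ' hφ'pos hφ'p hφ'corner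
  rw [Metric.tendsto_atTop] at hD
  obtain ⟨N, hN⟩ := hD δ hδpos
  refine ⟨s + N, fun u hu => ?_⟩
  set t : ℕ := u - s with ht
  have hut : u = s + t := by omega
  set F : A →L[ℂ] ℂ :=
    φ'.comp ((cornerCompression p).comp ((τ t).comp (cornerCompression p))) with hF
  set G : A →L[ℂ] ℂ := φ₀.comp (cornerCompression p) with hG
  have hDt : ‖F - G‖ < δ := by
    have h := hN t (by omega)
    rw [Real.dist_eq, sub_zero, abs_of_nonneg (norm_nonneg _)] at h
    exact h
  have hDt0 : (0:ℝ) ≤ ‖F - G‖ := norm_nonneg _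
  have hmain : ∀ x : A, ‖(ψ.comp (τ t) - φ₀) x‖ ≤ (15 * δ + ‖F - G‖) * ‖x‖ := by
    intro x
    set g : A →L[ℂ] ℂ := ψ.comp (τ t) with hg
    have hgpos : ∀ z : A, 0 ≤ z → 0 ≤ g z := fun z hz => hψpos _ (hτpos t z hz)
    have hg1 : g 1 = 1 := by
      show ψ (τ t 1) = 1
      rw [hτ1 t, hψ1]
    have hgq : ‖g (1 - p)‖ ≤ δ ^ 2 := hψτq t
    have T1 : ‖g x - g (p * x * p)‖ ≤ 2 * δ * ‖x‖ :=
      corner_tail g hgpos hg1 hp hpsa hpn hδpos.le hgq x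
    set y : A := τ t (p * x * p) with hy
    have hyn : ‖y‖ ≤ 6 * ‖x‖ := by
      have h6 := posmap_norm (τ t) (hτ1 t) (hτpos t) (p * x * p)
      have h7 := hpxp x
      rw [← hy] at h6
      linarith
    have T2 : ‖ψ y - ψ (p * y * p)‖ ≤ 2 * δ * ‖y‖ :=
      corner_tail ψ hψpos hψ1 hp hpsa hpn hδpos.le hψq y
    have hgpxp : g (p * x * p) = ψ y := rfl
    have hψCy : ψ (p * y * p) = c₀ * F x := by
      have hFx : F x = c₀⁻¹ * ψ (p * y * p) := by
        show φ' (cornerCompression p (τ t (cornerCompression p x))) = _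
        rw [hφ'apply, hC, hC, sandwich hp]
      rw [hFx, ← mul_assoc, mul_inv_cancel₀ hc₀ne, one_mul]
    have hφ₀x : φ₀ x = G x := by
      rw [hφ₀corner x, hG]
      show φ₀ (p * x * p) = φ₀ (cornerCompression p x)
      rw [hC]
    have T3 : ‖ψ (p * y * p) - φ₀ x‖ ≤ ‖F - G‖ * ‖x‖ + δ ^ 2 * ‖x‖ := by
      have hdecomp : ψ (p * y * p) - φ₀ x = c₀ * (F x - G x) + (c₀ - 1) * G x := by
        rw [hψCy, hφ₀x]; ring
      rw [hdecomp]
      have e1 : ‖c₀ * (F x - G x)‖ ≤ ‖F - G‖ * ‖x‖ := by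
        rw [norm_mul]
        calc ‖c₀‖ * ‖F x - G x‖ ≤ 1 * ‖F x - G x‖ :=
              mul_le_mul_of_nonneg_right hc₀norm (norm_nonneg _)
          _ = ‖(F - G) x‖ := by rw [one_mul, ContinuousLinearMap.sub_apply]
          _ ≤ ‖F - G‖ * ‖x‖ := (F - G).le_opNorm x
      have e2 : ‖(c₀ - 1) * G x‖ ≤ δ ^ 2 * ‖x‖ := by
        rw [norm_mul]
        have hc1 : ‖c₀ - 1‖ ≤ δ ^ 2 := by
          have hm : c₀ - 1 = -(ψ (1 - p)) := by rw [hc₀eq]; ring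
          rw [hm, norm_neg]; exact hψq
        have hGx : ‖G x‖ ≤ ‖x‖ := by
          have hb := norm_apply_le φ₀ hφ₀pos (p * x * p)
          rw [hφ₀1] at hb
          simp only [norm_one, one_mul] at hb
          have : G x = φ₀ (p * x * p) := by
            show φ₀ (cornerCompression p x) = _
            rw [hC]
          rw [this]
          exact hb.trans (hpxp x)
        exact mul_le_mul hc1 hGx (norm_nonneg _) (by positivity)
      calc ‖c₀ * (F x - G x) + (c₀ - 1) * G x‖
          ≤ ‖c₀ * (F x - G x)‖ + ‖(c₀ - 1) * G x‖ := norm_add_le _ _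
        _ ≤ ‖F - G‖ * ‖x‖ + δ ^ 2 * ‖x‖ := add_le_add e1 e2
    have hsplit : (ψ.comp (τ t) - φ₀) x
        = (g x - g (p * x * p)) + (ψ y - ψ (p * y * p)) + (ψ (p * y * p) - φ₀ x) := by
      simp only [ContinuousLinearMap.sub_apply]
      rw [hgpxp]
      ring
    rw [hsplit]
    calc ‖(g x - g (p * x * p)) + (ψ y - ψ (p * y * p)) + (ψ (p * y * p) - φ₀ x)‖
        ≤ ‖g x - g (p * x * p)‖ + ‖ψ y - ψ (p * y * p)‖ + ‖ψ (p * y * p) - φ₀ x‖ := by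
          refine (norm_add_le _ _).trans ?_
          exact add_le_add_left (norm_add_le _ _) _
      _ ≤ 2 * δ * ‖x‖ + 2 * δ * (6 * ‖x‖) + (‖F - G‖ * ‖x‖ + δ ^ 2 * ‖x‖) := by
          refine add_le_add (add_le_add T1 (T2.trans ?_)) T3
          exact mul_le_mul_of_nonneg_left hyn (by positivity)
      _ ≤ (15 * δ + ‖F - G‖) * ‖x‖ := by
          have k1 : δ ^ 2 * ‖x‖ ≤ δ * ‖x‖ :=
            mul_le_mul_of_nonneg_right hδsq (norm_nonneg x)
          linarith [k1]
  have hop : ‖ψ.comp (τ t) - φ₀‖ ≤ 15 * δ + ‖F - G‖ :=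
    ContinuousLinearMap.opNorm_le_bound _ (by positivity) hmain
  have hcompEq : φ.comp (τ u) = ψ.comp (τ t) := by
    ext x
    show φ (τ u x) = ψ (τ t x)
    rw [hut, hsemi s t x]
    rfl
  rw [Real.dist_eq, sub_zero, abs_of_nonneg (norm_nonneg _), hcompEq]
  calc ‖ψ.comp (τ t) - φ₀‖ ≤ 15 * δ + ‖F - G‖ := hop
    _ < 15 * δ + δ := by linarith
    _ ≤ ε := by linarith
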